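/- arXiv:2204.08228 — 2 statements merged into one kernel-verified Lean document; each statement's English description precedes it below -/
import Mathlib

section
/- For every even natural number n ≥ 2, ∑_{k=0}^{n/2 - 1} 1/sin²((2k+1)π/(2n)) = n²/2. -/
open Real Finset
open Polynomial

noncomputable def zc (n k : ℕ) : ℂ := Complex.exp ((2 * (k:ℂ) + 1) * (Real.pi : ℂ) * Complex.I / n)

lemma derivative_finset_prod' {R ι : Type*} [CommRing R] [DecidableEq ι] (s : Finset ι)
    (f : ι → R[X]) :
    derivative (∏ i ∈ s, f i) = ∑ i ∈ s, (∏ j ∈ s.erase i, f j) * derivative (f i) := by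
  rw [Finset.prod, Polynomial.derivative_prod, Finset.sum]
  refine congrArg Multiset.sum ?_
  refine Multiset.map_congr rfl fun i _ => ?_
  rw [Finset.prod, Finset.erase_val]

lemma zc_prod (n : ℕ) (hn : n ≠ 0) :
    ∏ k ∈ Finset.range n, (X - C (zc n k)) = X ^ n + 1 := by
  have hn' : (n : ℂ) ≠ 0 := Nat.cast_ne_zero.mpr hn
  have hζ : IsPrimitiveRoot (Complex.exp (2 * Real.pi * Complex.I / n)) n :=
    Complex.isPrimitiveRoot_exp n hn
  have hα : Complex.exp ((Real.pi : ℂ) * Complex.I / n) ^ n = -1 := by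
    rw [← Complex.exp_nat_mul]
    rw [show (n : ℂ) * ((Real.pi : ℂ) * Complex.I / n) = (Real.pi : ℂ) * Complex.I by
      field_simp]
    exact Complex.exp_pi_mul_I
  have h := X_pow_sub_C_eq_prod hζ (Nat.pos_of_ne_zero hn) hα
  rw [map_neg, map_one, sub_neg_eq_add] at h
  rw [h]
  refine Finset.prod_congr rfl fun i _ => ?_
  congr 1
  rw [zc, ← Complex.exp_nat_mul, ← Complex.exp_add]
  congr 1
  field_simp

lemma zc_key (n k : ℕ) (hn : n ≠ 0) :
    (1 - zc n k) ^ 2 = -4 * zc n k * Complex.sin ((2 * (k:ℂ) + 1) * (Real.pi:ℂ) / (2 * n)) ^ 2 := by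
  have hn' : (n : ℂ) ≠ 0 := Nat.cast_ne_zero.mpr hn
  set θ : ℂ := (2 * (k:ℂ) + 1) * (Real.pi:ℂ) / (2 * n) with hθ
  have hz : zc n k = Complex.exp (θ * Complex.I) ^ 2 := by
    rw [← Complex.exp_nat_mul, zc]
    congr 1
    rw [hθ]
    field_simp
    ring
  rw [hz, Complex.sin]
  have he := Complex.exp_ne_zero (θ * Complex.I)
  rw [show -θ * Complex.I = -(θ * Complex.I) by ring, Complex.exp_neg]
  field_simp
  ring_nf
  simp only [Complex.I_sq]
  ring

lemma sin_ne (n k : ℕ) (hk : k < n) : Real.sin ((2 * (k:ℝ) + 1) * π / (2 * n)) ≠ 0 := by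
  have hn : (0:ℝ) < n := by exact_mod_cast Nat.zero_lt_of_lt hk
  have hk' : (k:ℝ) + 1 ≤ n := by exact_mod_cast hk
  have h1 : 0 < (2 * (k:ℝ) + 1) * π / (2 * n) := by positivity
  have h2 : (2 * (k:ℝ) + 1) * π / (2 * n) < π := by
    rw [div_lt_iff₀ (by positivity)]
    nlinarith [mul_pos Real.pi_pos (show (0:ℝ) < 2*(n:ℝ) - (2*(k:ℝ)+1) by linarith)]
  exact ne_of_gt (Real.sin_pos_of_pos_of_lt_pi h1 h2)

lemma sinC_ne (n k : ℕ) (hk : k < n) :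
    Complex.sin ((2 * (k:ℂ) + 1) * (Real.pi:ℂ) / (2 * n)) ≠ 0 := by
  have hcast : ((2 * (k:ℂ) + 1) * (Real.pi:ℂ) / (2 * n))
      = (((2 * (k:ℝ) + 1) * Real.pi / (2 * n) : ℝ) : ℂ) := by push_cast; ring
  rw [hcast, ← Complex.ofReal_sin]
  exact_mod_cast sin_ne n k hk

lemma one_sub_zc_ne (n k : ℕ) (hk : k < n) : 1 - zc n k ≠ 0 := by
  have hn : n ≠ 0 := Nat.pos_iff_ne_zero.mp (Nat.zero_lt_of_lt hk)
  intro h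
  have hkey := zc_key n k hn
  rw [h] at hkey
  have hS := sinC_ne n k hk
  have hz : zc n k ≠ 0 := Complex.exp_ne_zero _
  have hne : (-4 : ℂ) * zc n k * Complex.sin ((2 * (k:ℂ) + 1) * (Real.pi:ℂ) / (2 * n)) ^ 2 ≠ 0 :=
    mul_ne_zero (mul_ne_zero (by norm_num) hz) (pow_ne_zero _ hS)
  rw [← hkey] at hne
  simp at hne

lemma full_sum (n : ℕ) (hn2 : 2 ≤ n) :
    ∑ k ∈ Finset.range n, 1 / (Real.sin ((2 * (k:ℝ) + 1) * π / (2 * n))) ^ 2 = (n:ℝ) ^ 2 := by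
  classical
  have hn : n ≠ 0 := by omega
  have hnC : (n : ℂ) ≠ 0 := Nat.cast_ne_zero.mpr hn
  set a : ℕ → ℂ := fun k => (1 - zc n k)⁻¹ with ha
  have hP := zc_prod n hn
  -- eval at 1
  have hprod1 : ∏ k ∈ Finset.range n, (1 - zc n k) = 2 := by
    have := congrArg (Polynomial.eval 1) hP
    simpa [Polynomial.eval_prod, one_add_one_eq_two] using this
  have hprod_erase : ∀ j ∈ Finset.range n,
      ∏ k ∈ (Finset.range n).erase j, (1 - zc n k) = 2 * a j := by
    intro j hj
    have h1 := Finset.mul_prod_erase (Finset.range n) (fun k => 1 - zc n k) hj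
    rw [hprod1] at h1
    have hj' := one_sub_zc_ne n j (Finset.mem_range.mp hj)
    simp only [ha]
    rw [← h1, mul_comm (1 - zc n j), mul_assoc, mul_inv_cancel₀ hj', mul_one]
  -- first derivative
  have hD1 : ∑ j ∈ Finset.range n, a j = (n : ℂ) / 2 := by
    have hd := congrArg Polynomial.derivative hP
    rw [derivative_finset_prod'] at hd
    simp only [Polynomial.derivative_X_sub_C, mul_one, Polynomial.derivative_add,
      Polynomial.derivative_one, Polynomial.derivative_X_pow, add_zero] at hd
    have he := congrArg (Polynomial.eval 1) hd
    simp only [Polynomial.eval_finset_sum, Polynomial.eval_prod, Polynomial.eval_sub,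
      Polynomial.eval_X, Polynomial.eval_C, Polynomial.eval_mul, Polynomial.eval_pow,
      Polynomial.eval_one, one_pow, mul_one, Polynomial.eval_natCast] at he
    rw [Finset.sum_congr rfl hprod_erase] at he
    rw [← Finset.mul_sum] at he
    field_simp at he ⊢
    linear_combination he
  -- second derivative
  have hprod_erase2 : ∀ j ∈ Finset.range n, ∀ l ∈ (Finset.range n).erase j,
      ∏ k ∈ ((Finset.range n).erase j).erase l, (1 - zc n k) = 2 * a j * a l := by
    intro j hj l hl
    have h1 := Finset.mul_prod_erase ((Finset.range n).erase j) (fun k => 1 - zc n k) hl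
    rw [hprod_erase j hj] at h1
    have hl' := one_sub_zc_ne n l (Finset.mem_range.mp (Finset.mem_of_mem_erase hl))
    have hj' := one_sub_zc_ne n j (Finset.mem_range.mp hj)
    rw [← h1]
    simp only [ha]
    rw [mul_comm (1 - zc n l), mul_assoc, mul_inv_cancel₀ hl', mul_one]
  have hD2 : ∑ j ∈ Finset.range n, ∑ l ∈ (Finset.range n).erase j, a j * a l
      = (n : ℂ) * ((n : ℂ) - 1) / 2 := by
    have hd := congrArg Polynomial.derivative hP
    rw [derivative_finset_prod'] at hd
    simp only [Polynomial.derivative_X_sub_C, mul_one, Polynomial.derivative_add,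
      Polynomial.derivative_one, Polynomial.derivative_X_pow, add_zero] at hd
    have hd2 := congrArg Polynomial.derivative hd
    rw [map_sum] at hd2
    simp only [derivative_finset_prod', Polynomial.derivative_X_sub_C, mul_one,
      Polynomial.derivative_C_mul, Polynomial.derivative_X_pow] at hd2
    have he := congrArg (Polynomial.eval 1) hd2
    simp only [Polynomial.eval_finset_sum, Polynomial.eval_prod, Polynomial.eval_sub,
      Polynomial.eval_X, Polynomial.eval_C, Polynomial.eval_mul, Polynomial.eval_pow,
      Polynomial.eval_one, one_pow, mul_one, Polynomial.eval_natCast] at he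
    have hrw : ∀ j ∈ Finset.range n,
        ∑ l ∈ (Finset.range n).erase j, ∏ k ∈ ((Finset.range n).erase j).erase l, (1 - zc n k)
        = ∑ l ∈ (Finset.range n).erase j, 2 * a j * a l :=
      fun j hj => Finset.sum_congr rfl (hprod_erase2 j hj)
    rw [Finset.sum_congr rfl hrw] at he
    have hcast : ((n - 1 : ℕ) : ℂ) = (n : ℂ) - 1 := by
      push_cast [Nat.cast_sub (by omega : 1 ≤ n)]; ring
    rw [hcast] at he
    calc ∑ j ∈ Finset.range n, ∑ l ∈ (Finset.range n).erase j, a j * a l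
        = (∑ j ∈ Finset.range n, ∑ l ∈ (Finset.range n).erase j, 2 * a j * a l) / 2 := by
          rw [Finset.sum_div]
          refine Finset.sum_congr rfl fun j _ => ?_
          rw [Finset.sum_div]
          refine Finset.sum_congr rfl fun l _ => ?_
          ring
      _ = (n : ℂ) * ((n : ℂ) - 1) / 2 := by rw [he]
  -- sum of squares
  have hsq : ∑ j ∈ Finset.range n, a j ^ 2
      = ((n : ℂ) / 2) ^ 2 - (n : ℂ) * ((n : ℂ) - 1) / 2 := by
    have hexp : ((n : ℂ) / 2) ^ 2
        = ∑ j ∈ Finset.range n, a j ^ 2 + ∑ j ∈ Finset.range n, ∑ l ∈ (Finset.range n).erase j, a j * a l := by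
      rw [← hD1, sq, Finset.sum_mul_sum, ← Finset.sum_add_distrib]
      refine Finset.sum_congr rfl fun j hj => ?_
      rw [← Finset.add_sum_erase _ (fun l => a j * a l) hj, sq]
    rw [hexp, hD2]
    ring
  -- per-term identity
  have hterm : ∀ k ∈ Finset.range n,
      ((1 / (Real.sin ((2 * (k:ℝ) + 1) * π / (2 * n))) ^ 2 : ℝ) : ℂ) = 4 * a k - 4 * a k ^ 2 := by
    intro k hk
    have hk' := Finset.mem_range.mp hk
    have hkey := zc_key n k hn
    have hS := sinC_ne n k hk'
    have hz1 := one_sub_zc_ne n k hk'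
    have hcast : ((2 * (k:ℂ) + 1) * (Real.pi:ℂ) / (2 * n))
        = (((2 * (k:ℝ) + 1) * Real.pi / (2 * n) : ℝ) : ℂ) := by push_cast; ring
    rw [hcast, ← Complex.ofReal_sin] at hkey hS
    push_cast
    rw [hcast, ← Complex.ofReal_sin]
    simp only [ha]
    set S : ℂ := ((Real.sin ((2 * (k:ℝ) + 1) * π / (2 * n)) : ℝ) : ℂ) with hSdef
    set w : ℂ := zc n k with hw
    field_simp
    linear_combination hkey
  -- assemble complex sum
  have hsumC : ∑ k ∈ Finset.range n,
      ((1 / (Real.sin ((2 * (k:ℝ) + 1) * π / (2 * n))) ^ 2 : ℝ) : ℂ) = (n : ℂ) ^ 2 := by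
    rw [Finset.sum_congr rfl hterm, Finset.sum_sub_distrib, ← Finset.mul_sum, ← Finset.mul_sum,
      hD1, hsq]
    ring
  have := hsumC
  rw [← Complex.ofReal_sum] at this
  exact_mod_cast this

theorem stmt9 (n : ℕ) (hn : Even n) (hn2 : 2 ≤ n) :
    ∑ k ∈ Finset.range (n / 2),
      1 / (Real.sin ((2 * (k : ℝ) + 1) * π / (2 * n))) ^ 2 = (n : ℝ) ^ 2 / 2 := by
  obtain ⟨m, hm⟩ := hn
  have hm1 : 1 ≤ m := by omega
  have hhalf : n / 2 = m := by omega
  have hn0 : (n : ℝ) ≠ 0 := by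
    have : 0 < n := by omega
    positivity
  set f : ℕ → ℝ := fun k => 1 / (Real.sin ((2 * (k : ℝ) + 1) * π / (2 * n))) ^ 2 with hf
  have hs : ∑ k ∈ Finset.range (m + m), f k = (n : ℝ) ^ 2 := by
    rw [← hm]; exact full_sum n hn2
  rw [Finset.sum_range_add] at hs
  have hrefl : ∑ k ∈ Finset.range m, f (m + k) = ∑ k ∈ Finset.range m, f k := by
    rw [← Finset.sum_range_reflect (fun j => f (m + j)) m]
    refine Finset.sum_congr rfl fun k hk => ?_
    have hk' := Finset.mem_range.mp hk
    simp only [hf]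
    have hcast : ((m + (m - 1 - k) : ℕ) : ℝ) = (n : ℝ) - 1 - k := by
      have h1 : m + (m - 1 - k) + (k + 1) = n := by omega
      have h2 := congrArg (Nat.cast : ℕ → ℝ) h1
      push_cast at h2
      push_cast
      linarith
    rw [hcast]
    rw [show (2 * ((n:ℝ) - 1 - (k:ℝ)) + 1) * π / (2 * n) = π - (2 * (k:ℝ) + 1) * π / (2 * n) from by
      field_simp; ring]
    rw [Real.sin_pi_sub]
  rw [hrefl] at hs
  rw [hhalf]
  show ∑ k ∈ Finset.range m, f k = (n : ℝ) ^ 2 / 2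
  linarith
end

section
/- For every odd natural number n ≥ 3 and even positive integer j = 2p with gcd(j, n) = 1, ∑_{k=0}^{(n-3)/2} [sin((j+1)(2k+1)π/(2n)) · sin((j-1)(2k+1)π/(2n))] / [sin²((2k+1)π/(2n)) · sin²(p(2k+1)π/n)] = (n² - 1)/3. -/
open Real Finset

lemma aux_sum_id (n : ℕ) : ∑ i ∈ range n, (i:ℂ) = n*(n-1)/2 := by
  induction n with
  | zero => simp
  | succ n ih => rw [Finset.sum_range_succ, ih]; push_cast; ring

-- sum of squares

lemma aux_sum_sq (n : ℕ) : ∑ i ∈ range n, (i:ℂ)^2 = n*(n-1)*(2*n-1)/6 := by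
  induction n with
  | zero => simp
  | succ n ih => rw [Finset.sum_range_succ, ih]; push_cast; ring

-- geometric sum of nontrivial root of unity is zero

lemma aux_geom_zero {z : ℂ} {n : ℕ} (hz : z ^ n = 1) (h1 : z ≠ 1) :
    ∑ i ∈ range n, z ^ i = 0 := by
  rw [geom_sum_eq h1, hz, sub_self, zero_div]

-- (z-1) * ∑ i z^i identity

lemma aux_weighted (z : ℂ) (n : ℕ) :
    (z - 1) * ∑ i ∈ range n, (i:ℂ) * z ^ i
      = (n:ℂ) * z ^ n - z ^ n - (∑ i ∈ range n, z ^ i) + 1 := by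
  induction n with
  | zero => simp
  | succ n ih =>
    rw [Finset.sum_range_succ, Finset.sum_range_succ (fun i => z ^ i), mul_add, ih]
    push_cast; ring

lemma aux_inv_form {z : ℂ} {n : ℕ} (hn : n ≠ 0) (hz : z ^ n = 1) (h1 : z ≠ 1) :
    1 / (1 - z) = -(1/n) * ∑ i ∈ range n, (i:ℂ) * z ^ i := by
  have h := aux_weighted z n
  rw [hz, aux_geom_zero hz h1] at h
  have hz1 : (1:ℂ) - z ≠ 0 := fun h => h1 (by linear_combination -h)
  have hnc : (n:ℂ) ≠ 0 := Nat.cast_ne_zero.mpr hn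
  field_simp
  linear_combination -h

lemma aux_inner_ne {w u : ℂ} {n : ℕ} (hn : n ≠ 0) (hw : w ^ n = 1) (hu : u ^ n = 1)
    (hne : w ≠ u) : ∑ m ∈ Finset.Ico 1 n, w ^ m * u ^ (n - m) = -1 := by
  have hfull : ∑ m ∈ range n, w ^ m * u ^ (n - m) = 0 := by
    have h2 : ∑ m ∈ range n, w ^ m * u ^ (n - m) = u * ∑ m ∈ range n, w ^ m * u ^ (n - 1 - m) := by
      rw [Finset.mul_sum]
      refine Finset.sum_congr rfl fun m hm => ?_
      have hm' : m < n := Finset.mem_range.mp hm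
      have : n - m = (n - 1 - m) + 1 := by omega
      rw [this, pow_succ]; ring
    have h3 : (∑ m ∈ range n, w ^ m * u ^ (n - 1 - m)) * (w - u) = w ^ n - u ^ n :=
      geom_sum₂_mul w u n
    have hwu : w - u ≠ 0 := sub_ne_zero.mpr hne
    have : (∑ m ∈ range n, w ^ m * u ^ (n - 1 - m)) = 0 := by
      have := h3
      rw [hw, hu, sub_self] at this
      exact (mul_eq_zero.mp this).resolve_right hwu
    rw [h2, this, mul_zero]
  have hsplit : ∑ m ∈ range n, w ^ m * u ^ (n - m)
      = w ^ 0 * u ^ (n - 0) + ∑ m ∈ Finset.Ico 1 n, w ^ m * u ^ (n - m) := by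
    rw [Finset.range_eq_Ico, Finset.sum_eq_sum_Ico_succ_bot (Nat.pos_of_ne_zero hn)]
  rw [hfull] at hsplit
  simp [hu] at hsplit
  linear_combination -hsplit

lemma aux_inner_eq {u : ℂ} {n : ℕ} (hn : n ≠ 0) (hu : u ^ n = 1) :
    ∑ m ∈ Finset.Ico 1 n, u ^ m * u ^ (n - m) = (n:ℂ) - 1 := by
  have : ∀ m ∈ Finset.Ico 1 n, u ^ m * u ^ (n - m) = 1 := by
    intro m hm
    have hm' := Finset.mem_Ico.mp hm
    rw [← pow_add]
    have : m + (n - m) = n := by omega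
    rw [this, hu]
  rw [Finset.sum_congr rfl this, Finset.sum_const, Nat.card_Ico]
  rw [nsmul_eq_mul, mul_one, Nat.cast_sub (by omega : 1 ≤ n), Nat.cast_one]

lemma aux_master_complex (n : ℕ) (hn : n ≠ 0) :
    ∑ m ∈ Finset.Ico 1 n,
      1 / ((1 - Complex.exp (2*π*Complex.I/n) ^ m) *
           (1 - Complex.exp (2*π*Complex.I/n) ^ (n - m))) = ((n:ℂ)^2 - 1)/12 := by
  set ζ := Complex.exp (2*π*Complex.I/n) with hζdef
  have hprim : IsPrimitiveRoot ζ n := Complex.isPrimitiveRoot_exp n hn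
  have hζn : ζ ^ n = 1 := hprim.pow_eq_one
  have hpn : ∀ m, (ζ ^ m) ^ n = 1 := by
    intro m; rw [← pow_mul, mul_comm, pow_mul, hζn, one_pow]
  have hne1 : ∀ m ∈ Finset.Ico 1 n, ζ ^ m ≠ 1 := by
    intro m hm h
    obtain ⟨h1, h2⟩ := Finset.mem_Ico.mp hm
    have := Nat.le_of_dvd (by omega) (hprim.dvd_of_pow_eq_one m h)
    omega
  have hnc : (n:ℂ) ≠ 0 := Nat.cast_ne_zero.mpr hn
  have key : ∀ i ∈ range n, ∀ a ∈ range n,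
      ∑ m ∈ Finset.Ico 1 n, (ζ^i)^m * (ζ^a)^(n-m) = (if i = a then (n:ℂ) else 0) - 1 := by
    intro i hi a ha
    by_cases h : i = a
    · subst h; rw [if_pos rfl, aux_inner_eq hn (hpn i)]
    · rw [if_neg h, zero_sub]
      exact aux_inner_ne hn (hpn i) (hpn a)
        (fun hh => h (hprim.pow_inj (Finset.mem_range.mp hi) (Finset.mem_range.mp ha) hh))
  have hterm : ∀ m ∈ Finset.Ico 1 n, 1/((1-ζ^m)*(1-ζ^(n-m)))
      = (1/(n:ℂ)^2) * ∑ i ∈ range n, ∑ a ∈ range n, ((i:ℂ)*a) * ((ζ^i)^m * (ζ^a)^(n-m)) := by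
    intro m hm
    obtain ⟨h1, h2⟩ := Finset.mem_Ico.mp hm
    have hm' : n - m ∈ Finset.Ico 1 n := Finset.mem_Ico.mpr ⟨by omega, by omega⟩
    have e1 : 1/(1-ζ^m) = -(1/(n:ℂ)) * ∑ i ∈ range n, (i:ℂ) * (ζ^m)^i :=
      aux_inv_form hn (hpn m) (hne1 m hm)
    have e2 : 1/(1-ζ^(n-m)) = -(1/(n:ℂ)) * ∑ a ∈ range n, (a:ℂ) * (ζ^(n-m))^a :=
      aux_inv_form hn (hpn (n-m)) (hne1 (n-m) hm')
    have hSS : (∑ i ∈ range n, (i:ℂ)*(ζ^m)^i) * (∑ a ∈ range n, (a:ℂ)*(ζ^(n-m))^a)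
        = ∑ i ∈ range n, ∑ a ∈ range n, ((i:ℂ)*a) * ((ζ^i)^m * (ζ^a)^(n-m)) := by
      rw [Finset.sum_mul_sum]
      refine Finset.sum_congr rfl fun i _ => Finset.sum_congr rfl fun a _ => ?_
      have p1 : (ζ^m)^i = (ζ^i)^m := by rw [← pow_mul, mul_comm, pow_mul]
      have p2 : (ζ^(n-m))^a = (ζ^a)^(n-m) := by rw [← pow_mul, mul_comm, pow_mul]
      rw [p1, p2]; ring
    rw [← one_div_mul_one_div, e1, e2]
    linear_combination (1 / (n:ℂ)^2) * hSS
  rw [Finset.sum_congr rfl hterm, ← Finset.mul_sum]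
  have swap : ∑ m ∈ Finset.Ico 1 n, ∑ i ∈ range n, ∑ a ∈ range n,
        ((i:ℂ)*a) * ((ζ^i)^m * (ζ^a)^(n-m))
      = ∑ i ∈ range n, ∑ a ∈ range n, ((i:ℂ)*a) * ((if i = a then (n:ℂ) else 0) - 1) := by
    rw [Finset.sum_comm]
    refine Finset.sum_congr rfl fun i hi => ?_
    rw [Finset.sum_comm]
    refine Finset.sum_congr rfl fun a ha => ?_
    rw [← Finset.mul_sum, key i hi a ha]
  rw [swap]
  have inner : ∀ i ∈ range n, ∑ a ∈ range n, ((i:ℂ)*a) * ((if i = a then (n:ℂ) else 0) - 1)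
      = (i:ℂ)^2*n - (i:ℂ) * ((n:ℂ)*(n-1)/2) := by
    intro i hi
    have : ∀ a ∈ range n, ((i:ℂ)*a) * ((if i = a then (n:ℂ) else 0) - 1)
        = (if i = a then (i:ℂ)*a*n else 0) - (i:ℂ)*a := by
      intro a _; by_cases h : i = a <;> simp [h] <;> ring
    rw [Finset.sum_congr rfl this, Finset.sum_sub_distrib,
      Finset.sum_ite_eq (range n) i (fun x => (i:ℂ)*x*(n:ℂ)), if_pos hi, ← Finset.mul_sum,
      aux_sum_id]
    ring
  rw [Finset.sum_congr rfl inner, Finset.sum_sub_distrib, ← Finset.sum_mul, aux_sum_sq,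
    ← Finset.sum_mul, aux_sum_id]
  field_simp
  ring

lemma aux_bridge (n : ℕ) (hn : n ≠ 0) (m : ℕ) (hm : m ∈ Finset.Ico 1 n) :
    (1 - Complex.exp (2*π*Complex.I/n) ^ m) * (1 - Complex.exp (2*π*Complex.I/n) ^ (n - m))
      = ((4 * Real.sin ((m:ℝ)*π/n)^2 : ℝ) : ℂ) := by
  obtain ⟨h1, h2⟩ := Finset.mem_Ico.mp hm
  have hnc : (n:ℂ) ≠ 0 := Nat.cast_ne_zero.mpr hn
  set t : ℝ := 2*π*(m:ℝ)/n with ht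
  have htc : ((t:ℝ):ℂ) = 2*(π:ℂ)*(m:ℂ)/(n:ℂ) := by rw [ht]; push_cast; ring
  have e1 : Complex.exp (2*π*Complex.I/n) ^ m = Complex.cos t + Complex.sin t * Complex.I := by
    rw [← Complex.exp_nat_mul, show ((m:ℂ)) * (2*(π:ℂ)*Complex.I/(n:ℂ)) = (t:ℂ) * Complex.I by
      rw [htc]; field_simp, Complex.exp_mul_I]
  have e2 : Complex.exp (2*π*Complex.I/n) ^ (n - m)
      = Complex.cos t - Complex.sin t * Complex.I := by
    rw [← Complex.exp_nat_mul, show (((n - m : ℕ):ℂ)) * (2*(π:ℂ)*Complex.I/(n:ℂ))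
        = ((2*π - t : ℝ):ℂ) * Complex.I by
      push_cast [Nat.cast_sub h2.le, htc]; field_simp, Complex.exp_mul_I]
    push_cast
    rw [Complex.cos_sub, Complex.sin_sub, Complex.cos_two_pi, Complex.sin_two_pi]
    ring
  have hreal : (4 * Real.sin ((m:ℝ)*π/n)^2 : ℝ) = 2 - 2 * Real.cos t := by
    have h2' : t = 2 * ((m:ℝ)*π/n) := by rw [ht]; ring
    rw [h2', Real.cos_two_mul]
    nlinarith [Real.sin_sq_add_cos_sq ((m:ℝ)*π/n)]
  rw [e1, e2, hreal]
  push_cast [Complex.ofReal_cos]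
  have hsc := Complex.sin_sq_add_cos_sq (t:ℂ)
  linear_combination hsc + (-(Complex.sin (t:ℂ))^2) * Complex.I_sq

lemma aux_sin_ne (n : ℕ) (m : ℕ) (h1 : 1 ≤ m) (h2 : m < n) : Real.sin ((m:ℝ)*π/n) ≠ 0 := by
  have hn0 : 0 < (n:ℝ) := by
    have : 0 < n := by omega
    exact_mod_cast this
  have hpos : 0 < (m:ℝ)*π/n := by
    have : 0 < (m:ℝ) := by exact_mod_cast h1
    positivity
  have hlt : (m:ℝ)*π/n < π := by
    rw [div_lt_iff₀ hn0]
    have : (m:ℝ) < n := by exact_mod_cast h2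
    nlinarith [Real.pi_pos]
  exact ne_of_gt (Real.sin_pos_of_pos_of_lt_pi hpos hlt)

lemma aux_master_real (n : ℕ) (hn : n ≠ 0) :
    ∑ m ∈ range n, 1 / Real.sin ((m:ℝ)*π/n)^2 = ((n:ℝ)^2 - 1)/3 := by
  have hsplit : ∑ m ∈ range n, 1 / Real.sin ((m:ℝ)*π/n)^2
      = 1 / Real.sin ((0:ℝ)*π/n)^2 + ∑ m ∈ Finset.Ico 1 n, 1 / Real.sin ((m:ℝ)*π/n)^2 := by
    rw [Finset.range_eq_Ico, Finset.sum_eq_sum_Ico_succ_bot (Nat.pos_of_ne_zero hn)]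
    norm_num
  rw [hsplit, show (1:ℝ) / Real.sin ((0:ℝ)*π/n)^2 = 0 by norm_num, zero_add]
  have key : ((∑ m ∈ Finset.Ico 1 n, 1 / Real.sin ((m:ℝ)*π/n)^2 : ℝ) : ℂ)
      = ((n:ℂ)^2 - 1)/3 := by
    rw [Complex.ofReal_sum]
    have hterm : ∀ m ∈ Finset.Ico 1 n, ((1 / Real.sin ((m:ℝ)*π/n)^2 : ℝ) : ℂ)
        = 4 * (1 / ((1 - Complex.exp (2*π*Complex.I/n) ^ m) *
            (1 - Complex.exp (2*π*Complex.I/n) ^ (n - m)))) := by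
      intro m hm
      rw [aux_bridge n hn m hm]
      obtain ⟨hm1, hm2⟩ := Finset.mem_Ico.mp hm
      have hs : ((Real.sin ((m:ℝ)*π/n) : ℝ) : ℂ) ≠ 0 :=
        Complex.ofReal_ne_zero.mpr (aux_sin_ne n m hm1 hm2)
      push_cast
      field_simp
    calc ∑ m ∈ Finset.Ico 1 n, ((1 / Real.sin ((m:ℝ)*π/n)^2 : ℝ) : ℂ)
        = ∑ m ∈ Finset.Ico 1 n, 4 * (1 / ((1 - Complex.exp (2*π*Complex.I/n) ^ m) *
            (1 - Complex.exp (2*π*Complex.I/n) ^ (n - m)))) := Finset.sum_congr rfl hterm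
      _ = 4 * (((n:ℂ)^2 - 1)/12) := by rw [← Finset.mul_sum, aux_master_complex n hn]
      _ = ((n:ℂ)^2 - 1)/3 := by ring
  have key2 : ((∑ m ∈ Finset.Ico 1 n, 1 / Real.sin ((m:ℝ)*π/n)^2 : ℝ) : ℂ)
      = ((((n:ℝ)^2 - 1)/3 : ℝ) : ℂ) := by rw [key]; push_cast; ring
  exact Complex.ofReal_inj.mp key2

lemma aux_half (h : ℕ) (g : ℕ → ℝ) (hsym : ∀ k, k ≤ 2*h → g (2*h - k) = g k) :
    ∑ k ∈ range (2*h+1), g k = 2 * ∑ k ∈ range h, g k + g h := by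
  rw [show 2*h+1 = (h+1) + h by ring, Finset.sum_range_add, Finset.sum_range_succ]
  have e : ∀ i ∈ range h, g (h+1+i) = (fun i => g (h - 1 - i)) i := by
    intro i hi
    have hi' : i < h := Finset.mem_range.mp hi
    show g (h+1+i) = g (h - 1 - i)
    have e2 : h - 1 - i = 2*h - (h+1+i) := by omega
    rw [e2, hsym (h+1+i) (by omega)]
  rw [Finset.sum_congr rfl e, Finset.sum_range_reflect (fun i => g i) h]
  ring

lemma aux_even_odd (n : ℕ) (f : ℕ → ℝ) :
    ∑ m ∈ range (2*n), f m = ∑ k ∈ range n, f (2*k) + ∑ k ∈ range n, f (2*k+1) := by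
  induction n with
  | zero => simp
  | succ n ih =>
    rw [show 2*(n+1) = (2*n+1)+1 by ring, Finset.sum_range_succ, Finset.sum_range_succ,
      Finset.sum_range_succ, Finset.sum_range_succ, ih]
    ring

lemma aux_sin_sq_add_nat_pi (x : ℝ) (q : ℕ) : Real.sin (x + q*π)^2 = Real.sin x^2 := by
  induction q with
  | zero => simp
  | succ q ih =>
    have h : x + ((q:ℝ)+1)*π = (x + q*π) + π := by ring
    push_cast
    rw [h, Real.sin_add_pi, neg_sq, ih]

lemma aux_sin_sq_mod (n : ℕ) (hn : n ≠ 0) (m : ℕ) :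
    Real.sin (((m % n : ℕ):ℝ)*π/n)^2 = Real.sin ((m:ℝ)*π/n)^2 := by
  have hnr : (n:ℝ) ≠ 0 := Nat.cast_ne_zero.mpr hn
  have hm : m = n * (m / n) + m % n := (Nat.div_add_mod m n).symm
  have harg : (m:ℝ)*π/n = ((m % n : ℕ):ℝ)*π/n + (m/n : ℕ)*π := by
    rw [show (m:ℝ) = (n:ℝ) * (m/n : ℕ) + ((m % n : ℕ):ℝ) by exact_mod_cast congrArg Nat.cast hm]
    field_simp
    ring
  rw [harg, aux_sin_sq_add_nat_pi]

lemma aux_odd_sum (n : ℕ) (hn : n ≠ 0) :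
    ∑ k ∈ range n, 1 / Real.sin ((2*(k:ℝ)+1)*π/(2*n))^2 = (n:ℝ)^2 := by
  have hn' : 0 < n := Nat.pos_of_ne_zero hn
  have hnr : (0:ℝ) < n := by exact_mod_cast hn'
  have h2n := aux_master_real (2*n) (by omega)
  rw [aux_even_odd n (fun m => 1 / Real.sin ((m:ℝ)*π/((2*n:ℕ):ℝ))^2)] at h2n
  have he : ∑ k ∈ range n, 1 / Real.sin (((2*k:ℕ):ℝ)*π/((2*n:ℕ):ℝ))^2 = ((n:ℝ)^2-1)/3 := by
    rw [← aux_master_real n hn]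
    refine Finset.sum_congr rfl fun k _ => ?_
    have : ((2*k:ℕ):ℝ)*π/((2*n:ℕ):ℝ) = (k:ℝ)*π/(n:ℝ) := by
      push_cast
      rw [div_eq_div_iff (by positivity) (by positivity)]
      ring
    rw [this]
  have ho : ∑ k ∈ range n, 1 / Real.sin (((2*k+1:ℕ):ℝ)*π/((2*n:ℕ):ℝ))^2
      = ∑ k ∈ range n, 1 / Real.sin ((2*(k:ℝ)+1)*π/(2*(n:ℝ)))^2 := by
    refine Finset.sum_congr rfl fun k _ => ?_
    have : ((2*k+1:ℕ):ℝ)*π/((2*n:ℕ):ℝ) = (2*(k:ℝ)+1)*π/(2*(n:ℝ)) := by push_cast; ring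
    rw [this]
  rw [he, ho] at h2n
  push_cast at h2n
  linear_combination h2n

lemma aux_S1 (n : ℕ) (hn : Odd n) (hn3 : 3 ≤ n) :
    ∑ k ∈ range ((n-1)/2), 1 / Real.sin ((2*(k:ℝ)+1)*π/(2*n))^2 = ((n:ℝ)^2-1)/2 := by
  obtain ⟨h, hh⟩ : ∃ h, n = 2*h+1 := hn
  have hh1 : 1 ≤ h := by omega
  have hrange : (n-1)/2 = h := by omega
  have hnr : (n:ℝ) = 2*h+1 := by exact_mod_cast congrArg Nat.cast hh
  have hsym : ∀ k, k ≤ 2*h → (fun (k:ℕ) => 1 / Real.sin ((2*(k:ℝ)+1)*π/(2*(n:ℝ)))^2) (2*h - k)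
      = (fun (k:ℕ) => 1 / Real.sin ((2*(k:ℝ)+1)*π/(2*(n:ℝ)))^2) k := by
    intro k hk
    simp only []
    have hc : ((2*h - k : ℕ):ℝ) = 2*(h:ℝ) - k := by
      push_cast [Nat.cast_sub hk]; ring
    have harg : (2*(2*(h:ℝ) - k)+1)*π/(2*(n:ℝ)) = π - (2*(k:ℝ)+1)*π/(2*(n:ℝ)) := by
      rw [hnr]; field_simp; ring
    rw [hc, harg, Real.sin_pi_sub]
  have key := aux_half h (fun (k:ℕ) => 1 / Real.sin ((2*(k:ℝ)+1)*π/(2*(n:ℝ)))^2) hsym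
  rw [show 2*h+1 = n from hh.symm] at key
  rw [aux_odd_sum n (by omega)] at key
  have hmid : (fun (k:ℕ) => 1 / Real.sin ((2*(k:ℝ)+1)*π/(2*(n:ℝ)))^2) h = 1 := by
    simp only []
    have : (2*(h:ℝ)+1)*π/(2*(n:ℝ)) = π/2 := by
      rw [hnr]; field_simp
    rw [this, Real.sin_pi_div_two]
    norm_num
  beta_reduce at hmid; rw [hmid] at key
  rw [hrange]
  linarith [key]

lemma aux_S2 (n p : ℕ) (hn : Odd n) (hn3 : 3 ≤ n) (hp : 1 ≤ p)
    (hgcd : Nat.gcd (2*p) n = 1) :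
    ∑ k ∈ range ((n-1)/2), 1 / Real.sin ((p:ℝ)*(2*(k:ℝ)+1)*π/n)^2 = ((n:ℝ)^2-1)/6 := by
  obtain ⟨h, hh⟩ : ∃ h, n = 2*h+1 := hn
  have hh1 : 1 ≤ h := by omega
  have hn0 : n ≠ 0 := by omega
  have hrange : (n-1)/2 = h := by omega
  have hnr : (n:ℝ) = 2*h+1 := by exact_mod_cast congrArg Nat.cast hh
  have hinj : ∀ x ∈ range n, ∀ y ∈ range n,
      (p*(2*x+1)) % n = (p*(2*y+1)) % n → x = y := by
    intro x hx y hy hxy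
    have hcp : Nat.Coprime p n := Nat.Coprime.coprime_dvd_left (dvd_mul_left p 2) hgcd
    have hc2 : Nat.Coprime 2 n := Nat.Coprime.coprime_dvd_left (dvd_mul_right 2 p) hgcd
    have hmx : Nat.ModEq n (p*(2*x+1)) (p*(2*y+1)) := hxy
    have h1 : Nat.ModEq n (2*x+1) (2*y+1) := Nat.ModEq.cancel_left_of_coprime (Nat.Coprime.symm hcp) hmx
    have h2 : Nat.ModEq n (2*x) (2*y) := Nat.ModEq.add_right_cancel' 1 h1
    have h3 : Nat.ModEq n x y := Nat.ModEq.cancel_left_of_coprime (Nat.Coprime.symm hc2) h2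
    have hx' := Finset.mem_range.mp hx
    have hy' := Finset.mem_range.mp hy
    have h4 : x % n = y % n := h3
    rw [Nat.mod_eq_of_lt hx', Nat.mod_eq_of_lt hy'] at h4
    exact h4
  have himg : Finset.image (fun k => (p*(2*k+1)) % n) (range n) = range n := by
    apply Finset.eq_of_subset_of_card_le
    · intro r hr
      obtain ⟨k, _, hk⟩ := Finset.mem_image.mp hr
      exact Finset.mem_range.mpr (hk ▸ Nat.mod_lt _ (by omega))
    · rw [Finset.card_image_of_injOn fun x hx y hy => hinj x hx y hy]
  have hGF : ∀ k : ℕ, (fun (k:ℕ) => 1 / Real.sin ((p:ℝ)*(2*(k:ℝ)+1)*π/(n:ℝ))^2) k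
      = (fun (r:ℕ) => 1 / Real.sin ((r:ℝ)*π/(n:ℝ))^2) ((p*(2*k+1)) % n) := by
    intro k
    simp only []
    rw [aux_sin_sq_mod n hn0 (p*(2*k+1))]
    have : ((p*(2*k+1):ℕ):ℝ)*π/(n:ℝ) = (p:ℝ)*(2*(k:ℝ)+1)*π/(n:ℝ) := by push_cast; ring
    rw [this]
  have hfull : ∑ k ∈ range n, 1 / Real.sin ((p:ℝ)*(2*(k:ℝ)+1)*π/(n:ℝ))^2
      = ((n:ℝ)^2-1)/3 := by
    calc ∑ k ∈ range n, 1 / Real.sin ((p:ℝ)*(2*(k:ℝ)+1)*π/(n:ℝ))^2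
        = ∑ k ∈ range n, (fun (r:ℕ) => 1 / Real.sin ((r:ℝ)*π/(n:ℝ))^2) ((p*(2*k+1)) % n) :=
          Finset.sum_congr rfl fun k _ => hGF k
      _ = ∑ r ∈ Finset.image (fun k => (p*(2*k+1)) % n) (range n),
            1 / Real.sin ((r:ℝ)*π/(n:ℝ))^2 :=
          (Finset.sum_image (f := fun (r:ℕ) => 1 / Real.sin ((r:ℝ)*π/(n:ℝ))^2) hinj).symm
      _ = ∑ r ∈ range n, 1 / Real.sin ((r:ℝ)*π/(n:ℝ))^2 := by rw [himg]
      _ = ((n:ℝ)^2-1)/3 := aux_master_real n hn0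
  have hsym : ∀ k, k ≤ 2*h → (fun (k:ℕ) => 1 / Real.sin ((p:ℝ)*(2*(k:ℝ)+1)*π/(n:ℝ))^2) (2*h - k)
      = (fun (k:ℕ) => 1 / Real.sin ((p:ℝ)*(2*(k:ℝ)+1)*π/(n:ℝ))^2) k := by
    intro k hk
    simp only []
    have hc : ((2*h - k : ℕ):ℝ) = 2*(h:ℝ) - k := by push_cast [Nat.cast_sub hk]; ring
    have harg : (p:ℝ)*(2*(2*(h:ℝ) - k)+1)*π/(n:ℝ)
        = ((2*p:ℕ):ℝ)*π - (p:ℝ)*(2*(k:ℝ)+1)*π/(n:ℝ) := by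
      rw [hnr]; push_cast; field_simp; ring
    rw [hc, harg, Real.sin_nat_mul_pi_sub]
    rw [pow_mul]
    norm_num
  have hmid : (fun (k:ℕ) => 1 / Real.sin ((p:ℝ)*(2*(k:ℝ)+1)*π/(n:ℝ))^2) h = 0 := by
    simp only []
    have : (p:ℝ)*(2*(h:ℝ)+1)*π/(n:ℝ) = (p:ℝ)*π := by rw [hnr]; field_simp
    rw [this, Real.sin_nat_mul_pi]
    norm_num
  have key := aux_half h (fun (k:ℕ) => 1 / Real.sin ((p:ℝ)*(2*(k:ℝ)+1)*π/(n:ℝ))^2) hsym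
  beta_reduce at hmid; rw [show 2*h+1 = n from hh.symm, hfull, hmid] at key
  rw [hrange]
  linarith [key]

lemma aux_sin_prod (a b : ℝ) :
    Real.sin (a+b) * Real.sin (a-b) = Real.sin a^2 - Real.sin b^2 := by
  rw [Real.sin_add, Real.sin_sub]
  linear_combination (Real.sin a^2) * Real.sin_sq_add_cos_sq b
    - (Real.sin b^2) * Real.sin_sq_add_cos_sq a

theorem stmt14 (n : ℕ) (hn : Odd n) (hn3 : 3 ≤ n) (p : ℕ) (hp : 1 ≤ p) (j : ℕ)
    (hj : j = 2 * p) (hgcd : Nat.gcd j n = 1) :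
    ∑ k ∈ Finset.range ((n - 3) / 2 + 1),
      Real.sin (((j : ℝ) + 1) * (2 * k + 1) * π / (2 * n)) *
        Real.sin (((j : ℝ) - 1) * (2 * k + 1) * π / (2 * n)) /
        ((Real.sin ((2 * (k : ℝ) + 1) * π / (2 * n))) ^ 2 *
          (Real.sin ((p : ℝ) * (2 * k + 1) * π / n)) ^ 2) =
    ((n : ℝ) ^ 2 - 1) / 3 := by
  subst hj
  have hn0 : n ≠ 0 := by omega
  have hnr0 : (0:ℝ) < (n:ℝ) := by exact_mod_cast Nat.pos_of_ne_zero hn0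
  have hcp : Nat.Coprime p n := Nat.Coprime.coprime_dvd_left (dvd_mul_left p 2) hgcd
  rw [show (n-3)/2 + 1 = (n-1)/2 from by omega]
  have hterm : ∀ k ∈ range ((n-1)/2),
      Real.sin (((2*p : ℕ):ℝ) + 1) * ((2*(k:ℝ)+1)) * π / (2*(n:ℝ)) = 0 → True := fun _ _ _ => trivial
  have key : ∀ k ∈ range ((n-1)/2),
      Real.sin ((((2*p:ℕ) : ℝ) + 1) * (2 * (k:ℝ) + 1) * π / (2 * n)) *
        Real.sin ((((2*p:ℕ) : ℝ) - 1) * (2 * (k:ℝ) + 1) * π / (2 * n)) /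
        ((Real.sin ((2 * (k : ℝ) + 1) * π / (2 * n))) ^ 2 *
          (Real.sin ((p : ℝ) * (2 * (k:ℝ) + 1) * π / n)) ^ 2)
      = 1 / (Real.sin ((2 * (k : ℝ) + 1) * π / (2 * n)))^2
        - 1 / (Real.sin ((p : ℝ) * (2 * (k:ℝ) + 1) * π / n))^2 := by
    intro k hk
    have hkn : 2*k+1 ≤ n-2 := by
      have := Finset.mem_range.mp hk
      omega
    set a : ℝ := (p : ℝ) * (2 * (k:ℝ) + 1) * π / n with ha
    set b : ℝ := (2 * (k : ℝ) + 1) * π / (2 * n) with hb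
    have harg1 : (((2*p:ℕ) : ℝ) + 1) * (2 * (k:ℝ) + 1) * π / (2 * n) = a + b := by
      rw [ha, hb]; push_cast; field_simp
    have harg2 : (((2*p:ℕ) : ℝ) - 1) * (2 * (k:ℝ) + 1) * π / (2 * n) = a - b := by
      rw [ha, hb]; push_cast; field_simp
    have hb_ne : Real.sin b ≠ 0 := by
      have h1 : Real.sin (((2*k+1 : ℕ):ℝ)*π/((2*n:ℕ):ℝ)) ≠ 0 :=
        aux_sin_ne (2*n) (2*k+1) (by omega) (by omega)
      have : ((2*k+1 : ℕ):ℝ)*π/((2*n:ℕ):ℝ) = b := by rw [hb]; push_cast; ring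
      rwa [this] at h1
    have ha_ne : Real.sin a ≠ 0 := by
      set m : ℕ := p*(2*k+1) with hm
      have hr_ne : m % n ≠ 0 := by
        intro h0
        have hdvd : n ∣ m := Nat.dvd_of_mod_eq_zero h0
        have : n ∣ (2*k+1) := (Nat.Coprime.dvd_of_dvd_mul_left (hcp.symm)) (by
          rwa [hm] at hdvd)
        have := Nat.le_of_dvd (by omega) this
        omega
      have hr_lt : m % n < n := Nat.mod_lt _ (by omega)
      have h1 : Real.sin (((m % n : ℕ):ℝ)*π/(n:ℝ)) ≠ 0 :=
        aux_sin_ne n (m % n) (by omega) hr_lt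
      have h2 : Real.sin (((m % n : ℕ):ℝ)*π/(n:ℝ))^2 = Real.sin ((m:ℝ)*π/(n:ℝ))^2 :=
        aux_sin_sq_mod n hn0 m
      have h3 : ((m:ℕ):ℝ)*π/(n:ℝ) = a := by rw [ha, hm]; push_cast; ring
      intro h4
      rw [h3, h4] at h2
      simp at h2
      exact h1 h2
    rw [harg1, harg2, aux_sin_prod a b]
    field_simp
  calc ∑ k ∈ Finset.range ((n-1)/2),
      Real.sin ((((2*p:ℕ) : ℝ) + 1) * (2 * (k:ℝ) + 1) * π / (2 * n)) *
        Real.sin ((((2*p:ℕ) : ℝ) - 1) * (2 * (k:ℝ) + 1) * π / (2 * n)) /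
        ((Real.sin ((2 * (k : ℝ) + 1) * π / (2 * n))) ^ 2 *
          (Real.sin ((p : ℝ) * (2 * (k:ℝ) + 1) * π / n)) ^ 2)
      = ∑ k ∈ Finset.range ((n-1)/2),
        (1 / (Real.sin ((2 * (k : ℝ) + 1) * π / (2 * n)))^2
          - 1 / (Real.sin ((p : ℝ) * (2 * (k:ℝ) + 1) * π / n))^2) :=
        Finset.sum_congr rfl key
    _ = ((n:ℝ)^2-1)/2 - ((n:ℝ)^2-1)/6 := by
        rw [Finset.sum_sub_distrib, aux_S1 n hn hn3, aux_S2 n p hn hn3 hp hgcd]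
    _ = ((n : ℝ) ^ 2 - 1) / 3 := by ring
end
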